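/- Let z ∈ ℂ with |z| = 1 and N ≥ 1. If z^{2^N} = ∑_{n ≥ N+1} 2^{N-n} z^{2^n} (the series converging absolutely since ∑_{n≥N+1} 2^{N-n} = 1), then the equation forces |z^{2^N}| = 1 to be attained as an average: in fact z^{2^N} = z^{2^n} for all n ≥ N+1, and consequently z^{2^N} = 1. In particular, the set of solutions z ∈ 𝕋 of z^{2^N} - ∑_{n≥N+1} 2^{N-n} z^{2^n} = 0 is finite. -/

import Mathlib

open Complex

private lemma unimodular_re_eq_one {u : ℂ} (h1 : ‖u‖ = 1) (h2 : u.re = 1) : u = 1 := by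
  have hsq : u.re ^ 2 + u.im ^ 2 = 1 := by
    have := Complex.sq_norm u
    rw [h1] at this
    simpa [Complex.normSq_apply, sq] using this.symm
  have him : u.im = 0 := by nlinarith [sq_nonneg u.im]
  exact Complex.ext (by simp [h2]) (by simp [him])

private lemma key (z : ℂ) (hz : ‖z‖ = 1) (N : ℕ)
    (heq : z ^ (2 ^ N) = ∑' k : ℕ, ((2 : ℂ)⁻¹) ^ (k + 1) * z ^ (2 ^ (N + 1 + k))) :
    (∀ n : ℕ, N + 1 ≤ n → z ^ (2 ^ N) = z ^ (2 ^ n)) ∧ z ^ (2 ^ N) = 1 := by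
  set w : ℂ := z ^ (2 ^ N) with hw
  have habsz : ∀ m : ℕ, ‖z ^ m‖ = 1 := by
    intro m; rw [norm_pow, hz, one_pow]
  have habw : ‖w‖ = 1 := habsz _
  set c : ℕ → ℂ := fun k => ((2 : ℂ)⁻¹) ^ (k + 1) * z ^ (2 ^ (N + 1 + k)) with hc
  have hnormc : ∀ k, ‖c k‖ = (2⁻¹ : ℝ) ^ (k + 1) := by
    intro k
    simp [hc, norm_mul, norm_pow, hz]
  have hsum_geo : Summable (fun k : ℕ => (2⁻¹ : ℝ) ^ (k + 1)) := by
    have := (summable_geometric_of_lt_one (by norm_num) (by norm_num : (2⁻¹:ℝ) < 1))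
    exact this.comp_injective (add_left_injective 1)
  have hsumc : Summable c := by
    apply Summable.of_norm
    simpa [hnormc] using hsum_geo
  -- g k = Re(conj w * c k)
  set g : ℕ → ℝ := fun k => ((starRingEnd ℂ) w * c k).re with hg
  have hsumg : Summable g := by
    have : Summable (fun k => (starRingEnd ℂ) w * c k) := hsumc.mul_left _
    exact (Complex.hasSum_re this.hasSum).summable
  have htsumg : ∑' k, g k = 1 := by
    have h1 : ∑' k, (starRingEnd ℂ) w * c k = (starRingEnd ℂ) w * w := by
      rw [tsum_mul_left, ← heq]
    have h2 := Complex.re_tsum (hsumc.mul_left ((starRingEnd ℂ) w))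
    rw [h1] at h2
    rw [hg]
    rw [← h2]
    have : (starRingEnd ℂ) w * w = (‖w‖^2 : ℝ) := by
      rw [mul_comm, Complex.mul_conj, ← Complex.sq_norm]
    rw [this, habw]
    norm_num
  have htsum_geo : ∑' k : ℕ, (2⁻¹ : ℝ) ^ (k + 1) = 1 := by
    have h := tsum_geometric_of_lt_one (by norm_num : (0:ℝ) ≤ 2⁻¹) (by norm_num : (2⁻¹:ℝ) < 1)
    calc ∑' k : ℕ, (2⁻¹ : ℝ) ^ (k + 1) = ∑' k : ℕ, (2⁻¹:ℝ) ^ k * 2⁻¹ := by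
          simp [pow_succ]
      _ = (1 - 2⁻¹)⁻¹ * 2⁻¹ := by rw [tsum_mul_right, h]
      _ = 1 := by norm_num
  set f : ℕ → ℝ := fun k => (2⁻¹ : ℝ) ^ (k + 1) - g k with hf
  have hre_le : ∀ k, ((starRingEnd ℂ) w * z ^ (2 ^ (N + 1 + k))).re ≤ 1 := by
    intro k
    have h := Complex.re_le_norm ((starRingEnd ℂ) w * z ^ (2 ^ (N + 1 + k)))
    rwa [norm_mul, Complex.norm_conj, habw, habsz, one_mul] at h
  have hgk : ∀ k, g k = (2⁻¹ : ℝ) ^ (k + 1) * ((starRingEnd ℂ) w * z ^ (2 ^ (N + 1 + k))).re := by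
    intro k
    rw [hg, hc]
    simp only []
    have : (starRingEnd ℂ) w * (((2 : ℂ)⁻¹) ^ (k + 1) * z ^ (2 ^ (N + 1 + k)))
        = (((2:ℝ)⁻¹ ^ (k+1) : ℝ) : ℂ) * ((starRingEnd ℂ) w * z ^ (2 ^ (N + 1 + k))) := by
      push_cast
      ring
    rw [this, Complex.re_ofReal_mul]
  have hfnonneg : ∀ k, 0 ≤ f k := by
    intro k
    rw [hf]
    simp only []
    rw [hgk k]
    have := hre_le k
    nlinarith [pow_pos (by norm_num : (0:ℝ) < 2⁻¹) (k+1)]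
  have hsumf : Summable f := hsum_geo.sub hsumg
  have htsumf : ∑' k, f k = 0 := by
    rw [hf, Summable.tsum_sub hsum_geo hsumg, htsum_geo, htsumg, sub_self]
  have hfzero : ∀ k, f k = 0 := by
    intro k
    by_contra hne
    have hpos : 0 < f k := lt_of_le_of_ne (hfnonneg k) (Ne.symm hne)
    have := Summable.tsum_pos hsumf hfnonneg k hpos
    rw [htsumf] at this
    exact lt_irrefl _ this
  have hterm : ∀ k, z ^ (2 ^ (N + 1 + k)) = w := by
    intro k
    have h0 := hfzero k
    rw [hf] at h0
    simp only [] at h0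
    rw [hgk k] at h0
    have hp : (0:ℝ) < (2⁻¹:ℝ) ^ (k+1) := pow_pos (by norm_num) _
    have hre1 : ((starRingEnd ℂ) w * z ^ (2 ^ (N + 1 + k))).re = 1 := by
      have h0' : (2⁻¹:ℝ) ^ (k+1) * ((starRingEnd ℂ) w * z ^ (2 ^ (N + 1 + k))).re
          = (2⁻¹:ℝ) ^ (k+1) * 1 := by linarith
      exact mul_left_cancel₀ (ne_of_gt hp) h0' 
    have habu : ‖(starRingEnd ℂ) w * z ^ (2 ^ (N + 1 + k))‖ = 1 := by
      rw [norm_mul, Complex.norm_conj, habw, habsz, one_mul]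
    have := unimodular_re_eq_one habu hre1
    have hwne : w ≠ 0 := by
      intro h; rw [h] at habw; simp at habw
    have : w * ((starRingEnd ℂ) w * z ^ (2 ^ (N + 1 + k))) = w * 1 := by rw [this]
    rw [← mul_assoc, Complex.mul_conj, mul_one] at this
    have hns : (Complex.normSq w : ℂ) = 1 := by
      rw [Complex.normSq_eq_norm_sq, habw]; norm_num
    rw [hns, one_mul] at this
    exact this
  constructor
  · intro n hn
    obtain ⟨k, rfl⟩ := Nat.exists_eq_add_of_le hn
    exact (hterm k).symm
  · -- w = z^{2^{N+1}} = w^2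
    have h1 : z ^ (2 ^ (N + 1)) = w := by simpa using hterm 0
    have h2 : z ^ (2 ^ (N + 1)) = w ^ 2 := by
      rw [hw, ← pow_mul, ← pow_succ]
    have : w ^ 2 = w := by rw [← h2, h1]
    have hwne : w ≠ 0 := by
      intro h; rw [h] at habw; simp at habw
    have : w * w = w * 1 := by rw [mul_one, ← sq]; exact this
    exact mul_left_cancel₀ hwne this

theorem unimodular_convex_combination_power_eq_one (N : ℕ) (hN : 1 ≤ N) :
    (∀ z : ℂ, ‖z‖ = 1 →
      z ^ (2 ^ N) = ∑' k : ℕ, ((2 : ℂ)⁻¹) ^ (k + 1) * z ^ (2 ^ (N + 1 + k)) →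
      (∀ n : ℕ, N + 1 ≤ n → z ^ (2 ^ N) = z ^ (2 ^ n)) ∧ z ^ (2 ^ N) = 1) ∧
    {z : ℂ | ‖z‖ = 1 ∧
      z ^ (2 ^ N) = ∑' k : ℕ, ((2 : ℂ)⁻¹) ^ (k + 1) * z ^ (2 ^ (N + 1 + k))}.Finite := by
  constructor
  · intro z hz heq
    exact key z hz N heq
  · apply Set.Finite.subset (Polynomial.nthRootsFinset (2 ^ N) (1 : ℂ)).finite_toSet
    rintro z ⟨hz, heq⟩
    rw [Finset.mem_coe, Polynomial.mem_nthRootsFinset (by positivity)]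
    exact (key z hz N heq).2
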